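/- Let 0 < m < n < 2m and suppose S ⊆ Σ^m ∪ Σ^n has co-finite S*. Then gcd(m, n) = 1, S* ≠ Σ*, and the length of the longest word not in S* is at most g(m, l) = m·l − m − l, where l = m·|Σ|^{n−m} + (n−m). -/

import Mathlib

open Computability

namespace Stmt10Aux

variable {α : Type}

lemma length_flatten_replicate (r : ℕ) (y : List α) :
    ((List.replicate r y).flatten).length = r * y.length := by
  induction r with
  | zero => simp
  | succ r ih =>
      rw [List.replicate_succ, List.flatten_cons, List.length_append, ih, Nat.succ_mul]
      omega

lemma mem_star_of_mem {S : Language α} {u : List α} (hu : u ∈ S) :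
    u ∈ (S∗ : Language α) := by
  rw [Language.mem_kstar]
  exact ⟨[u], by simp, by simp [hu]⟩

lemma star_append {S : Language α} {u v : List α}
    (hu : u ∈ (S∗ : Language α)) (hv : v ∈ (S∗ : Language α)) :
    u ++ v ∈ (S∗ : Language α) := by
  rw [Language.mem_kstar] at hu hv ⊢
  obtain ⟨L1, rfl, h1⟩ := hu
  obtain ⟨L2, rfl, h2⟩ := hv
  refine ⟨L1 ++ L2, by simp, ?_⟩
  intro y hy
  rcases List.mem_append.1 hy with h | h
  · exact h1 y h
  · exact h2 y h

lemma star_first {S : Language α} {v : List α} (hv : v ∈ (S∗ : Language α))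
    (hne : v ≠ []) :
    ∃ z u, z ∈ S ∧ u ∈ (S∗ : Language α) ∧ v = z ++ u := by
  rw [Language.mem_kstar] at hv
  obtain ⟨L, rfl, hL⟩ := hv
  cases L with
  | nil => simp at hne
  | cons z L' =>
      refine ⟨z, L'.flatten, hL z (by simp), ?_, by simp⟩
      exact Language.join_mem_kstar (fun y hy => hL y (by simp [hy]))

lemma star_length_dvd {S : Language α} {m n d : ℕ}
    (hS : ∀ w ∈ S, w.length = m ∨ w.length = n) (hdm : d ∣ m) (hdn : d ∣ n)
    {v : List α} (hv : v ∈ (S∗ : Language α)) : d ∣ v.length := by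
  rw [Language.mem_kstar] at hv
  obtain ⟨L, rfl, hL⟩ := hv
  induction L with
  | nil => simp
  | cons z L ih =>
      rw [List.flatten_cons, List.length_append]
      refine Nat.dvd_add ?_ (ih fun y hy => hL y (List.mem_cons_of_mem _ hy))
      rcases hS z (hL z List.mem_cons_self) with h | h <;> rw [h] <;> assumption

lemma star_min_length {S : Language α} {m n : ℕ} (hmn : m ≤ n)
    (hS : ∀ w ∈ S, w.length = m ∨ w.length = n)
    {v : List α} (hv : v ∈ (S∗ : Language α)) (hne : v ≠ []) : m ≤ v.length := by
  obtain ⟨z, u, hz, hu, rfl⟩ := star_first hv hne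
  rcases hS z hz with h | h <;> rw [List.length_append, h] <;> omega

/-- In any `S∗`-decomposition of a word whose length is not a multiple of `m`,
the first block of length `n` sits at a position that is a multiple of `m`. -/
lemma first_n_block {S : Language α} {m n : ℕ} (hm : 0 < m)
    (hS : ∀ w ∈ S, w.length = m ∨ w.length = n) :
    ∀ N : ℕ, ∀ v : List α, v.length ≤ N → v ∈ (S∗ : Language α) → ¬ (m ∣ v.length) →
      ∃ e : ℕ, e * m + n ≤ v.length ∧ (v.drop (e * m)).take n ∈ S := by
  intro N
  induction N with
  | zero =>
      intro v hle hv hnd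
      have : v.length = 0 := by omega
      exact absurd (this ▸ dvd_zero m) hnd
  | succ N ihN =>
      intro v hle hv hnd
      have hne : v ≠ [] := by
        intro h
        subst h
        exact hnd (by simp)
      obtain ⟨z, u, hz, hu, rfl⟩ := star_first hv hne
      rcases hS z hz with hzm | hzn
      · -- first block has length m; recurse on the tail
        have hnd' : ¬ m ∣ u.length := by
          intro h
          apply hnd
          rw [List.length_append, hzm]
          exact Nat.dvd_add (dvd_refl m) h
        have hlen' : u.length ≤ N := by
          rw [List.length_append, hzm] at hle
          omega
        obtain ⟨e, he, hw⟩ := ihN u hlen' hu hnd'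
        refine ⟨e + 1, ?_, ?_⟩
        · rw [List.length_append, hzm, Nat.succ_mul]
          omega
        · have hdrop : (z ++ u).drop ((e + 1) * m) = u.drop (e * m) := by
            rw [List.drop_append]
            have h1 : z.drop ((e + 1) * m) = [] := by
              apply List.drop_eq_nil_of_le
              rw [hzm, Nat.succ_mul]
              omega
            rw [h1, List.nil_append, hzm]
            congr 1
            rw [Nat.succ_mul]
            omega
          rw [hdrop]
          exact hw
      · -- first block has length n : it is the window at position 0
        refine ⟨0, ?_, ?_⟩
        · rw [List.length_append, hzn]
          omega
        · rw [Nat.zero_mul, List.drop_zero, ← hzn, List.take_left]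
          exact hz

/-- Every word of length `m` is in `S`, otherwise the words `(u x)ᵏ u` give an
infinite family outside `S∗`. -/
lemma sigma_m_sub [Nonempty α] {S : Language α} {m n : ℕ} (hm : 0 < m) (hmn : m < n)
    (hS : ∀ w ∈ S, w.length = m ∨ w.length = n)
    (hcof : Set.Finite ((S∗ : Language α)ᶜ)) :
    ∀ u : List α, u.length = m → u ∈ S := by
  by_contra hcon
  push_neg at hcon
  obtain ⟨u, hum, huS⟩ := hcon
  set c : α := Classical.arbitrary α with hc
  set x : List α := List.replicate (n - m) c with hx
  have hux : (u ++ x).length = n := by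
    rw [List.length_append, hum, hx, List.length_replicate]
    omega
  set V : ℕ → List α := fun k => (List.replicate k (u ++ x)).flatten ++ u with hV
  have hVlen : ∀ k, (V k).length = k * n + m := by
    intro k
    rw [hV]
    simp only []
    rw [List.length_append, length_flatten_replicate, hux, hum]
  have hVnot : ∀ k, V k ∉ (S∗ : Language α) := by
    intro k
    induction k with
    | zero =>
        intro hmem
        have h0 : V 0 = u := by simp [hV]
        rw [h0] at hmem
        have hne : u ≠ [] := by
          intro h
          rw [h] at hum
          simp at hum
          omega
        obtain ⟨z, w, hz, hw, heq⟩ := star_first hmem hne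
        rcases hS z hz with hzl | hzl
        · have hlen := congrArg List.length heq
          rw [List.length_append, hzl, hum] at hlen
          have hw0 : w = [] := by
            rw [← List.length_eq_zero_iff]
            omega
          rw [hw0, List.append_nil] at heq
          exact huS (heq ▸ hz)
        · have hlen := congrArg List.length heq
          rw [List.length_append, hzl, hum] at hlen
          omega
    | succ k ih =>
        intro hmem
        have hVs : V (k + 1) = (u ++ x) ++ V k := by
          rw [hV]
          simp only []
          rw [List.replicate_succ, List.flatten_cons, List.append_assoc]
        rw [hVs] at hmem
        have hne : (u ++ x) ++ V k ≠ [] := by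
          intro h
          have h2 := congrArg List.length h
          rw [List.length_append, hux] at h2
          simp at h2
          omega
        obtain ⟨z, w, hz, hw, heq⟩ := star_first hmem hne
        rcases hS z hz with hzl | hzl
        · -- z would be u itself
          have hzu : z = u := by
            have h1 : ((u ++ x) ++ V k).take m = z := by
              rw [heq, ← hzl, List.take_left]
            rw [← h1, List.append_assoc, ← hum, List.take_left]
          exact huS (hzu ▸ hz)
        · -- z = u ++ x, tail = V k
          have hzux : z = u ++ x := by
            have h1 : ((u ++ x) ++ V k).take n = z := by
              rw [heq, ← hzl, List.take_left]
            rw [← h1, ← hux, List.take_left]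
          have hwV : w = V k := by
            have h1 : ((u ++ x) ++ V k).drop n = w := by
              rw [heq, ← hzl, List.drop_left]
            rw [← h1, ← hux, List.drop_left]
          exact ih (hwV ▸ hw)
  have hinj : Function.Injective V := by
    intro k1 k2 h
    have hlen : k1 * n + m = k2 * n + m := by
      rw [← hVlen k1, ← hVlen k2, h]
    exact Nat.eq_of_mul_eq_mul_right (show 0 < n by omega) (by omega)
  exact (Set.infinite_of_injective_forall_mem hinj hVnot) hcof

/-- The key pumping lemma: every long enough word whose length is not a multiple
of `m` has a factor of length `n` in `S`, starting at a position divisible by `m`. -/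
lemma grid_window [Fintype α] {S : Language α} {m n : ℕ} (hm : 0 < m) (hmn : m < n)
    (hn2m : n < 2 * m)
    (hS : ∀ w ∈ S, w.length = m ∨ w.length = n)
    (hcof : Set.Finite ((S∗ : Language α)ᶜ))
    {w : List α} (hndvd : ¬ m ∣ w.length)
    (hwlen : Fintype.card α ^ (n - m) * m + (n - m) ≤ w.length) :
    ∃ i : ℕ, i * m + n ≤ w.length ∧ (w.drop (i * m)).take n ∈ S := by
  classical
  by_contra hcon
  push_neg at hcon
  set t := n - m with ht
  have htpos : 0 < t := by omega
  have htm : t < m := by omega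
  have hn' : n = m + t := by omega
  set K := Fintype.card α ^ t with hK
  have hmem_t : ∀ i : ℕ, i ≤ K → i * m + t ≤ w.length := by
    intro i hi
    have h1 : i * m ≤ K * m := Nat.mul_le_mul_right m hi
    omega
  have hmain : ∀ i j : ℕ, i < j → j ≤ K →
      (w.drop (i * m)).take t = (w.drop (j * m)).take t → False := by
    intro i j hij hjK hxeq
    set a := i * m with ha
    set Y := (j - i) * m with hY
    have hYm : m ≤ Y := by
      have h1 : 1 * m ≤ (j - i) * m := Nat.mul_le_mul_right m (by omega)
      rw [Nat.one_mul] at h1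
      exact h1
    have hjm : j * m = a + Y := by
      rw [ha, hY, ← Nat.add_mul]
      congr 1
      omega
    have hcw : j * m + t ≤ w.length := hmem_t j hjK
    set A := w.take a with hA
    set B := w.drop (j * m) with hB
    set y := (w.drop a).take Y with hy
    have hAlen : A.length = a := by
      rw [hA, List.length_take]
      omega
    have hylen : y.length = Y := by
      rw [hy, List.length_take, List.length_drop]
      omega
    have hBlent : t ≤ B.length := by
      rw [hB, List.length_drop]
      omega
    have hsplit : w = A ++ (y ++ B) := by
      rw [hA, hy, hB]
      conv_lhs => rw [← List.take_append_drop a w]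
      congr 1
      conv_lhs => rw [← List.take_append_drop Y (w.drop a)]
      congr 1
      rw [List.drop_drop]
      congr 1
      omega
    have hxy : y.take t = B.take t := by
      rw [hy, List.take_take, min_eq_left (by omega : t ≤ Y)]
      rw [hB]
      exact hxeq
    set Wr : ℕ → List α := fun r => A ++ ((List.replicate r y).flatten ++ B) with hWr
    have hWrlen : ∀ r, (Wr r).length = a + r * Y + B.length := by
      intro r
      rw [hWr]
      simp only []
      rw [List.length_append, List.length_append, length_flatten_replicate, hAlen, hylen]
      omega
    have hW1 : Wr 1 = w := by
      rw [hWr]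
      simp only []
      have h1 : (List.replicate 1 y).flatten = y := by simp
      rw [h1, hsplit]
    have hwlen_eq : w.length = a + Y + B.length := by
      have := hWrlen 1
      rw [hW1] at this
      omega
    -- the common prefix of all the pumped words
    have hprefix : ∀ r, 1 ≤ r → (Wr r).take (a + Y + t) = w.take (a + Y + t) := by
      intro r hr
      obtain ⟨r', rfl⟩ : ∃ r', r = r' + 1 := ⟨r - 1, by omega⟩
      have hlen2 : (A ++ y).length = a + Y := by
        rw [List.length_append, hAlen, hylen]
      have h1 : Wr (r' + 1) = (A ++ y) ++ ((List.replicate r' y).flatten ++ B) := by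
        rw [hWr]
        simp only [List.replicate_succ, List.flatten_cons, List.append_assoc]
      have h2 : w = (A ++ y) ++ B := by
        rw [hsplit, List.append_assoc]
      have h3 : a + Y + t = (A ++ y).length + t := by omega
      rw [h1, h2, h3, List.take_length_add_append, List.take_length_add_append]
      congr 1
      cases r' with
      | zero => simp
      | succ r'' =>
          have h4 : (List.replicate (r'' + 1) y).flatten ++ B
              = y ++ ((List.replicate r'' y).flatten ++ B) := by
            simp only [List.replicate_succ, List.flatten_cons, List.append_assoc]
          rw [h4, List.take_append]
          have h5 : t - y.length = 0 := by omega
          rw [h5, List.take_zero, List.append_nil, hxy]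
    -- transfer of grid windows back to w, by induction on the pumping exponent
    have htrans : ∀ r, 1 ≤ r → ∀ e : ℕ, e * m + n ≤ (Wr r).length →
        ((Wr r).drop (e * m)).take n ∉ S := by
      intro r
      induction r with
      | zero => omega
      | succ r ih =>
          intro _ e hebound hwnd
          by_cases hcase : e * m + n ≤ a + Y + t
          · -- the window lies in the common prefix
            have hwin_eq : ((Wr (r + 1)).drop (e * m)).take n = (w.drop (e * m)).take n := by
              have h1 : ∀ v : List α, (v.drop (e * m)).take n
                  = (v.take (e * m + n)).drop (e * m) := by
                intro v
                rw [List.drop_take]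
                congr 1
                omega
              rw [h1, h1]
              congr 1
              have h2 : ∀ v : List α, v.take (e * m + n) = (v.take (a + Y + t)).take (e * m + n) := by
                intro v
                rw [List.take_take, min_eq_left hcase]
              rw [h2 (Wr (r + 1)), h2 w, hprefix (r + 1) (by omega)]
            have hwle : e * m + n ≤ w.length := by omega
            exact hcon e hwle (hwin_eq ▸ hwnd)
          · push_neg at hcase
            rcases Nat.eq_zero_or_pos r with h0 | hrpos
            · subst h0
              rw [hW1] at hebound hwnd
              exact hcon e hebound hwnd
            · -- the window lies beyond the first period: descend
              have h6 : j ≤ e := by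
                by_contra hcj
                push_neg at hcj
                have h7 : (e + 1) * m ≤ j * m := Nat.mul_le_mul_right m (by omega)
                have h8 : (e + 1) * m = e * m + m := by ring
                omega
              have hem : a + Y ≤ e * m := by
                have h9 : j * m ≤ e * m := Nat.mul_le_mul_right m h6
                omega
              have hid : (Wr (r + 1)).drop (e * m) = (Wr r).drop (e * m - Y) := by
                have hlen2 : (A ++ y).length = a + Y := by
                  rw [List.length_append, hAlen, hylen]
                have h1 : Wr (r + 1) = (A ++ y) ++ ((List.replicate r y).flatten ++ B) := by
                  rw [hWr]
                  simp only [List.replicate_succ, List.flatten_cons, List.append_assoc]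
                have h2 : Wr r = A ++ ((List.replicate r y).flatten ++ B) := rfl
                rw [h1, h2]
                have h5 := List.drop_length_add_append (l₁ := A ++ y)
                  (l₂ := (List.replicate r y).flatten ++ B) (e * m - (a + Y))
                rw [hlen2] at h5
                have h3 : a + Y + (e * m - (a + Y)) = e * m := by omega
                rw [h3] at h5
                rw [h5]
                have h6 := List.drop_length_add_append (l₁ := A)
                  (l₂ := (List.replicate r y).flatten ++ B) (e * m - (a + Y))
                rw [hAlen] at h6
                have h4 : a + (e * m - (a + Y)) = e * m - Y := by omega
                rw [h4] at h6
                rw [h6]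
              have he1 : (e - (j - i)) * m = e * m - Y := by
                rw [Nat.sub_mul, hY]
              have he2 : (e - (j - i)) * m + n ≤ (Wr r).length := by
                have hr1 := hWrlen r
                have hr2 := hWrlen (r + 1)
                have hr3 : (r + 1) * Y = r * Y + Y := by ring
                omega
              refine ih hrpos (e - (j - i)) he2 ?_
              rw [he1, ← hid]
              exact hwnd
    -- none of the pumped words is in S∗
    have hWnot : ∀ r, 1 ≤ r → Wr r ∉ (S∗ : Language α) := by
      intro r hr hmem
      have hnd : ¬ m ∣ (Wr r).length := by
        rw [hWrlen]
        intro hdvd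
        apply hndvd
        have hda : m ∣ a := ⟨i, by rw [ha, Nat.mul_comm]⟩
        have hdY : m ∣ Y := ⟨j - i, by rw [hY, Nat.mul_comm]⟩
        have hdrY : m ∣ r * Y := Dvd.dvd.mul_left hdY r
        have hdB : m ∣ B.length := by
          have h1 : m ∣ a + r * Y := Nat.dvd_add hda hdrY
          have h2 := Nat.dvd_sub hdvd h1
          have h3 : a + r * Y + B.length - (a + r * Y) = B.length := by omega
          rwa [h3] at h2
        rw [hwlen_eq]
        exact Nat.dvd_add (Nat.dvd_add hda hdY) hdB
      obtain ⟨e, he1, he2⟩ :=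
        first_n_block hm hS ((Wr r).length) (Wr r) le_rfl hmem hnd
      exact htrans r hr e he1 he2
    -- infinitely many omitted words: contradiction with co-finiteness
    have hinj : Function.Injective (fun k : ℕ => Wr (k + 1)) := by
      intro k1 k2 h
      have hlen := congrArg List.length h
      simp only [] at hlen
      rw [hWrlen, hWrlen] at hlen
      have h1 : (k1 + 1) * Y = (k2 + 1) * Y := by omega
      have h2 : k1 + 1 = k2 + 1 := Nat.eq_of_mul_eq_mul_right (by omega) h1
      omega
    exact (Set.infinite_of_injective_forall_mem hinj (fun k => hWnot (k + 1) (by omega))) hcof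
  -- pigeonhole on the K + 1 grid factors of length t
  set f : Fin (K + 1) → List.Vector α t := fun i =>
    ⟨(w.drop (i.val * m)).take t, by
      have h1 : i.val * m + t ≤ w.length := hmem_t i.val (by omega)
      rw [List.length_take, List.length_drop]
      omega⟩ with hf
  have hcard : Fintype.card (List.Vector α t) < Fintype.card (Fin (K + 1)) := by
    rw [card_vector, Fintype.card_fin, ← hK]
    omega
  obtain ⟨i₀, j₀, hne₀, hfeq⟩ := Fintype.exists_ne_map_eq_of_card_lt f hcard
  have hvaleq : (w.drop (i₀.val * m)).take t = (w.drop (j₀.val * m)).take t := by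
    have := congrArg Subtype.val hfeq
    simpa [hf] using this
  rcases Nat.lt_or_ge i₀.val j₀.val with h | h
  · exact hmain i₀.val j₀.val h (by omega) hvaleq
  · have hlt : j₀.val < i₀.val := by
      rcases Nat.lt_or_ge j₀.val i₀.val with h2 | h2
      · exact h2
      · exact absurd (Fin.ext (by omega)) hne₀
    exact hmain j₀.val i₀.val hlt (by omega) hvaleq.symm

lemma star_of_dvd {S : Language α} {m : ℕ} (hm : 0 < m)
    (hall : ∀ u : List α, u.length = m → u ∈ S) :
    ∀ k : ℕ, ∀ v : List α, v.length = k * m → v ∈ (S∗ : Language α) := by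
  intro k
  induction k with
  | zero =>
      intro v hv
      rw [Nat.zero_mul, List.length_eq_zero_iff] at hv
      rw [hv]
      exact Language.nil_mem_kstar S
  | succ k ih =>
      intro v hv
      have hkm : (k + 1) * m = k * m + m := by ring
      have h1 : v.take m ∈ S := by
        apply hall
        rw [List.length_take]
        omega
      have h2 : v.drop m ∈ (S∗ : Language α) := by
        apply ih
        rw [List.length_drop]
        omega
      have h3 := star_append (mem_star_of_mem h1) h2
      rwa [List.take_append_drop] at h3

lemma star_of_rep {S : Language α} {m l : ℕ} (hm : 0 < m)
    (hallm : ∀ u : List α, u.length = m → u ∈ S)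
    (hstarl : ∀ u : List α, u.length = l → u ∈ (S∗ : Language α)) :
    ∀ b a : ℕ, ∀ w : List α, w.length = a * m + b * l → w ∈ (S∗ : Language α) := by
  intro b
  induction b with
  | zero =>
      intro a w hw
      exact star_of_dvd hm hallm a w (by omega)
  | succ b ih =>
      intro a w hw
      have hbl : (b + 1) * l = b * l + l := by ring
      have h1 : w.take l ∈ (S∗ : Language α) := by
        apply hstarl
        rw [List.length_take]
        omega
      have h2 : w.drop l ∈ (S∗ : Language α) := by
        apply ih a
        rw [List.length_drop]
        omega
      have h3 := star_append h1 h2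
      rwa [List.take_append_drop] at h3

end Stmt10Aux

open Stmt10Aux in
/-- If `0 < m < n < 2m`, `S ⊆ Σ^m ∪ Σ^n`, and `S∗` is co-finite, then
`gcd(m,n) = 1`, `S∗ ≠ Σ∗`, and every word not in `S∗` has length at most
`g(m,l) = m·l − m − l` where `l = m·|Σ|^{n−m} + (n−m)`. -/
theorem longest_omitted_le_two_lengths {α : Type} [Fintype α] [Nonempty α] (m n : ℕ)
    (hm : 0 < m) (hmn : m < n) (hn2m : n < 2 * m)
    (S : Language α) (hS : ∀ w ∈ S, w.length = m ∨ w.length = n)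
    (hcof : Set.Finite ((S∗ : Language α)ᶜ))
    (l : ℕ) (hl : l = m * Fintype.card α ^ (n - m) + (n - m)) :
    Nat.gcd m n = 1 ∧
    (S∗ : Language α) ≠ (Set.univ : Set (List α)) ∧
    ∀ w : List α, w ∉ S∗ → w.length ≤ m * l - m - l := by
  have hm2 : 2 ≤ m := by omega
  -- 1. gcd(m, n) = 1
  have hgcd : Nat.gcd m n = 1 := by
    by_contra hg
    set d := Nat.gcd m n with hd
    have hd0 : 0 < d := Nat.gcd_pos_of_pos_left n hm
    have hd1 : 1 < d := by omega
    set c : α := Classical.arbitrary α with hc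
    have hfam : ∀ j : ℕ, List.replicate (j * d + 1) c ∉ (S∗ : Language α) := by
      intro j hmem
      have h1 := star_length_dvd hS (Nat.gcd_dvd_left m n) (Nat.gcd_dvd_right m n) hmem
      rw [List.length_replicate] at h1
      have h2 : d ∣ 1 := (Nat.dvd_add_right ⟨j, Nat.mul_comm j d⟩).mp h1
      have h3 := Nat.le_of_dvd (by omega) h2
      omega
    have hinj : Function.Injective (fun j : ℕ => List.replicate (j * d + 1) c) := by
      intro j1 j2 h
      have h1 := congrArg List.length h
      simp only [List.length_replicate] at h1
      have h2 : j1 * d = j2 * d := by omega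
      exact Nat.eq_of_mul_eq_mul_right hd0 h2
    exact (Set.infinite_of_injective_forall_mem hinj hfam) hcof
  -- helper facts
  have hK0 : 0 < Fintype.card α := Fintype.card_pos
  have hKt : 0 < Fintype.card α ^ (n - m) := pow_pos hK0 _
  have hl2 : 1 < l := by
    have h1 : m * 1 ≤ m * Fintype.card α ^ (n - m) := Nat.mul_le_mul_left m hKt
    omega
  -- Σ^m ⊆ S
  have hallm : ∀ u : List α, u.length = m → u ∈ S := sigma_m_sub hm hmn hS hcof
  -- 2. S∗ ≠ univ
  have hneuniv : (S∗ : Language α) ≠ (Set.univ : Set (List α)) := by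
    intro hequ
    have hmem : [Classical.arbitrary α] ∈ (S∗ : Language α) := by
      rw [hequ]
      exact Set.mem_univ _
    have h1 := star_min_length (le_of_lt hmn) hS hmem (by simp)
    simp at h1
    omega
  refine ⟨hgcd, hneuniv, ?_⟩
  -- 3. the length bound
  -- every word of length l is in S∗
  have hstarl : ∀ v : List α, v.length = l → v ∈ (S∗ : Language α) := by
    intro v hv
    have hndvd : ¬ m ∣ v.length := by
      rw [hv, hl]
      intro hdv
      have h1 : m ∣ (n - m) := (Nat.dvd_add_right ⟨Fintype.card α ^ (n - m), rfl⟩).mp hdv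
      have h2 := Nat.le_of_dvd (by omega) h1
      omega
    have hlen : Fintype.card α ^ (n - m) * m + (n - m) ≤ v.length := by
      rw [hv, hl, Nat.mul_comm]
    obtain ⟨i, hib, hiw⟩ := grid_window hm hmn hn2m hS hcof hndvd hlen
    have hsplit : v = v.take (i * m) ++ ((v.drop (i * m)).take n ++ v.drop (i * m + n)) := by
      conv_lhs => rw [← List.take_append_drop (i * m) v]
      congr 1
      conv_lhs => rw [← List.take_append_drop n (v.drop (i * m))]
      congr 1
      rw [List.drop_drop]
    have hiK : (i + 1) * m ≤ Fintype.card α ^ (n - m) * m := by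
      have h1 : i * m + n ≤ m * Fintype.card α ^ (n - m) + (n - m) := by
        rw [← hl, ← hv]
        exact hib
      have h2 : (i + 1) * m = i * m + m := by ring
      rw [Nat.mul_comm m (Fintype.card α ^ (n - m))] at h1
      omega
    have hi1K : i + 1 ≤ Fintype.card α ^ (n - m) := Nat.le_of_mul_le_mul_right hiK hm
    rw [hsplit]
    refine star_append (star_of_dvd hm hallm i _ ?_)
      (star_append (mem_star_of_mem hiw) (star_of_dvd hm hallm (Fintype.card α ^ (n - m) - i - 1) _ ?_))
    · rw [List.length_take]
      omega
    · rw [List.length_drop, hv, hl]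
      have h1 : (Fintype.card α ^ (n - m) - i - 1) * m
          = Fintype.card α ^ (n - m) * m - i * m - m := by
        rw [Nat.sub_mul, Nat.sub_mul, Nat.one_mul]
      have h2 : (i + 1) * m = i * m + m := by ring
      rw [h1, Nat.mul_comm m (Fintype.card α ^ (n - m))]
      omega
  -- coprimality of m and l
  have hml : Nat.Coprime m l := by
    have h0 : Nat.Coprime m (n - m) := by
      have h1 : Nat.Coprime m (n - m + m) := by
        have h2 : n - m + m = n := by omega
        rw [h2]
        exact hgcd
      exact Nat.coprime_add_self_right.mp h1
    have h3 : l = (n - m) + Fintype.card α ^ (n - m) * m := by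
      rw [hl]
      ring
    rw [h3]
    exact (Nat.coprime_add_mul_right_right m (n - m) _).mpr h0
  -- conclude via the Frobenius (Chicken McNugget) theorem
  intro w hw
  by_contra hb
  push_neg at hb
  apply hw
  have hfrob := frobeniusNumber_pair hml hm2 hl2
  have hrep : w.length ∈ AddSubmonoid.closure ({m, l} : Set ℕ) := by
    by_contra hno
    have h1 : w.length ≤ m * l - m - l := hfrob.2 hno
    omega
  rw [AddSubmonoid.mem_closure_pair] at hrep
  obtain ⟨a, b, hab⟩ := hrep
  simp only [smul_eq_mul] at hab
  exact star_of_rep hm hallm hstarl b a w (by omega)
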